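/- Let U₁ = I, U₂ = diag(1,−1), U₃ = ((0,1),(1,0)), U₄ = ((0,1),(−1,0)) be 2×2 complex matrices, and let Bell_k be the four Bell states of ℂ² ⊗ ℂ². Then for every state φ ∈ ℂ² and every k ∈ {1,2,3,4}, applying U_k to the third qubit of the vector (⟨Bell_k| ⊗ I)(φ ⊗ (|00⟩+|11⟩)/√2) recovers φ/2. That is, U_k ((⟨Bell_k| ⊗ I)(φ ⊗ Bell₁)) = (1/2) φ. -/
import Mathlib


noncomputable section

/-- `|ab⟩` as a function `Fin 2 × Fin 2 → ℂ`. -/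
def ketf (a b : Fin 2) : Fin 2 × Fin 2 → ℂ := fun p => if p = (a, b) then 1 else 0

/-- The four Bell states of `ℂ² ⊗ ℂ²`, as functions `Fin 2 × Fin 2 → ℂ`. -/
def BellF : Fin 4 → (Fin 2 × Fin 2 → ℂ) :=
  ![((Real.sqrt 2 : ℝ) : ℂ)⁻¹ • (ketf 0 0 + ketf 1 1),
    ((Real.sqrt 2 : ℝ) : ℂ)⁻¹ • (ketf 0 0 - ketf 1 1),
    ((Real.sqrt 2 : ℝ) : ℂ)⁻¹ • (ketf 0 1 + ketf 1 0),
    ((Real.sqrt 2 : ℝ) : ℂ)⁻¹ • (ketf 0 1 - ketf 1 0)]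

/-- The teleportation correction unitaries `U₁ = I`, `U₂ = Z`, `U₃ = X`, `U₄`. -/
def Ucorr : Fin 4 → Matrix (Fin 2) (Fin 2) ℂ :=
  ![1, !![1, 0; 0, -1], !![0, 1; 1, 0], !![0, 1; -1, 0]]

/-- Correctness of qubit teleportation: for every state `φ ∈ ℂ²` and every
measurement outcome `k`, applying `U k` to `(⟨Bell_k| ⊗ I)(φ ⊗ Bell₁)` recovers
`(1/2) φ`.  Here `(⟨Bell_k| ⊗ I)(φ ⊗ Bell₁) = fun c => Σ_{a,b} conj (Bell_k (a,b)) ·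
φ a · Bell₁ (b,c)`. -/
theorem stmt11 (φ : Fin 2 → ℂ) (k : Fin 4) :
    (Ucorr k).mulVec
        (fun c => ∑ a : Fin 2, ∑ b : Fin 2,
          (starRingEnd ℂ) (BellF k (a, b)) * (φ a * BellF 0 (b, c)))
      = (1 / 2 : ℂ) • φ := by
  have h4 : (((Real.sqrt 2 : ℝ) : ℂ))⁻¹ ^ 2 = 1 / 2 := by
    rw [inv_pow]
    norm_cast
    rw [Real.sq_sqrt (by norm_num : (0:ℝ) ≤ 2)]
    norm_num
  fin_cases k <;> funext c <;> fin_cases c <;>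
    simp [BellF, ketf, Ucorr, Matrix.mulVec, dotProduct, Fin.sum_univ_two,
      Matrix.one_apply, Prod.ext_iff, map_mul, Complex.conj_ofReal] <;>
    ring_nf <;> rw [h4] <;> ring

end
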